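/- For any base b ≥ 2 and any m ≥ 0, the Hammersley point set H_{b,m} = {(φ_b(n), n/b^m) : 0 ≤ n ≤ b^m − 1} is a (0,m,2)-net in base b: every interval J = [a_1 b^{-d_1}, (a_1+1) b^{-d_1}) × [a_2 b^{-d_2}, (a_2+1) b^{-d_2}) with d_1 + d_2 = m, d_i ≥ 0, 0 ≤ a_i < b^{d_i} contains exactly one point of H_{b,m}. -/

import Mathlib

noncomputable section

/-- The `k`-th base-`b` digit of `n`. -/
def digit (b n k : ℕ) : ℕ := n / b ^ k % b

/-- The base-`b` radical inverse `φ_b(n) = Σ_k n_k b^{-(k+1)}`. -/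
def radInv (b n : ℕ) : ℝ := ∑' k : ℕ, (digit b n k : ℝ) / (b : ℝ) ^ (k + 1)

/-- Digit reversal of the `d` lowest base-`b` digits. -/
def rev (b : ℕ) : ℕ → ℕ → ℕ
  | 0, _ => 0
  | d + 1, a => a % b * b ^ d + rev b d (a / b)

lemma rev_lt {b : ℕ} (hb : 1 ≤ b) : ∀ d a, rev b d a < b ^ d := by
  intro d
  induction d with
  | zero => intro a; simp [rev]
  | succ d ih =>
    intro a
    have h1 : rev b d (a / b) < b ^ d := ih _
    have h2 : a % b < b := Nat.mod_lt _ (by omega)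
    calc a % b * b ^ d + rev b d (a / b) < (a % b + 1) * b ^ d := by
          have : 0 < b ^ d := pow_pos (by omega) d
          nlinarith
      _ ≤ b * b ^ d := Nat.mul_le_mul_right _ (by omega)
      _ = b ^ (d + 1) := by ring

lemma rev_inj {b : ℕ} (hb : 1 ≤ b) : ∀ d a a', a < b ^ d → a' < b ^ d →
    rev b d a = rev b d a' → a = a' := by
  intro d
  induction d with
  | zero => intro a a' h h' _; simp at h h'; omega
  | succ d ih =>
    intro a a' h h' heq
    simp only [rev] at heq
    have hpow : 0 < b ^ d := pow_pos (by omega) d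
    have h1 : rev b d (a / b) < b ^ d := rev_lt hb _ _
    have h2 : rev b d (a' / b) < b ^ d := rev_lt hb _ _
    have e1 : (a % b * b ^ d + rev b d (a / b)) / b ^ d = a % b := by
      rw [Nat.mul_comm (a % b), Nat.mul_add_div hpow, Nat.div_eq_of_lt h1, Nat.add_zero]
    have e2 : (a' % b * b ^ d + rev b d (a' / b)) / b ^ d = a' % b := by
      rw [Nat.mul_comm (a' % b), Nat.mul_add_div hpow, Nat.div_eq_of_lt h2, Nat.add_zero]
    have hmod : a % b = a' % b := by rw [← e1, heq, e2]
    have hrev : rev b d (a / b) = rev b d (a' / b) := by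
      rw [hmod] at heq; omega
    have hab : a / b < b ^ d := by
      rw [Nat.div_lt_iff_lt_mul (by omega)]
      calc a < b ^ (d + 1) := h
        _ = b ^ d * b := by ring
    have hab' : a' / b < b ^ d := by
      rw [Nat.div_lt_iff_lt_mul (by omega)]
      calc a' < b ^ (d + 1) := h'
        _ = b ^ d * b := by ring
    have hdiv : a / b = a' / b := ih _ _ hab hab' hrev
    have hA := Nat.div_add_mod a b
    have hB := Nat.div_add_mod a' b
    rw [hdiv, hmod] at hA
    omega

lemma digit_succ (b n k : ℕ) : digit b n (k + 1) = digit b (n / b) k := by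
  simp only [digit]
  rw [Nat.div_div_eq_div_mul]
  ring_nf

lemma digit_zero_self (b n : ℕ) : digit b n 0 = n % b := by simp [digit]

lemma digit_eq_zero {b n k : ℕ} (h : n < b ^ k) : digit b n k = 0 := by
  simp [digit, Nat.div_eq_of_lt h]

lemma radInv_eq_sum {b n K : ℕ} (hb : 2 ≤ b) (h : n < b ^ K) :
    radInv b n = ∑ k ∈ Finset.range K, (digit b n k : ℝ) / (b : ℝ) ^ (k + 1) := by
  apply tsum_eq_sum
  intro k hk
  have hKk : K ≤ k := by simpa using hk
  have : n < b ^ k := lt_of_lt_of_le h (Nat.pow_le_pow_right (by omega) hKk)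
  rw [digit_eq_zero this]
  simp

lemma sum_digit_eq_rev {b : ℕ} (hb : 2 ≤ b) :
    ∀ d a, a < b ^ d →
    ∑ k ∈ Finset.range d, (digit b a k : ℝ) / (b : ℝ) ^ (k + 1) = (rev b d a : ℝ) / (b : ℝ) ^ d := by
  have hb0 : (0:ℝ) < (b:ℝ) := by exact_mod_cast Nat.lt_of_lt_of_le Nat.zero_lt_two hb
  intro d
  induction d with
  | zero => intro a ha; simp [rev]
  | succ d ih =>
    intro a ha
    have hab : a / b < b ^ d := by
      rw [Nat.div_lt_iff_lt_mul (by omega)]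
      calc a < b ^ (d + 1) := ha
        _ = b ^ d * b := by ring
    rw [Finset.sum_range_succ']
    have hstep : ∀ k, (digit b a (k + 1) : ℝ) / (b : ℝ) ^ (k + 1 + 1)
        = ((digit b (a / b) k : ℝ) / (b : ℝ) ^ (k + 1)) / (b : ℝ) := by
      intro k
      rw [digit_succ]
      rw [div_div, ← pow_succ]
    rw [Finset.sum_congr rfl (fun k _ => hstep k), ← Finset.sum_div, ih _ hab,
      digit_zero_self]
    simp only [rev]
    push_cast
    field_simp
    ring

lemma digit_mod {b d k : ℕ} (hb : 2 ≤ b) (hk : k < d) (n : ℕ) :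
    digit b (n % b ^ d) k = digit b n k := by
  have hdvd : b ^ (k + 1) ∣ b ^ d := pow_dvd_pow b hk
  have key : ∀ x : ℕ, digit b x k = x % b ^ (k + 1) / b ^ k := by
    intro x
    rw [digit, pow_succ, Nat.mod_mul_right_div_self]
  rw [key, key, Nat.mod_mod_of_dvd n hdvd]

lemma digit_div (b d k n : ℕ) : digit b (n / b ^ d) k = digit b n (d + k) := by
  rw [digit, digit, Nat.div_div_eq_div_mul, ← pow_add]

lemma radInv_split {b : ℕ} (hb : 2 ≤ b) (d e n : ℕ) (hn : n < b ^ (d + e)) :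
    radInv b n = ((rev b d (n % b ^ d) : ℝ) + radInv b (n / b ^ d)) / (b : ℝ) ^ d := by
  have hbpos : 0 < b := by omega
  have hmodlt : n % b ^ d < b ^ d := Nat.mod_lt _ (pow_pos hbpos d)
  have hdivlt : n / b ^ d < b ^ e := by
    rw [Nat.div_lt_iff_lt_mul (pow_pos hbpos d)]
    calc n < b ^ (d + e) := hn
      _ = b ^ e * b ^ d := by rw [← pow_add, add_comm]
  rw [radInv_eq_sum hb hn, Finset.sum_range_add]
  have e1 : ∑ k ∈ Finset.range d, (digit b n k : ℝ) / (b : ℝ) ^ (k + 1)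
      = (rev b d (n % b ^ d) : ℝ) / (b : ℝ) ^ d := by
    rw [← sum_digit_eq_rev hb d _ hmodlt]
    exact Finset.sum_congr rfl fun k hk => by
      rw [digit_mod hb (Finset.mem_range.1 hk)]
  have e2 : ∑ k ∈ Finset.range e, (digit b n (d + k) : ℝ) / (b : ℝ) ^ (d + k + 1)
      = radInv b (n / b ^ d) / (b : ℝ) ^ d := by
    rw [radInv_eq_sum hb hdivlt, Finset.sum_div]
    exact Finset.sum_congr rfl fun k _ => by
      rw [digit_div, div_div, ← pow_add]
      congr 2
      omega
  rw [e1, e2, add_div]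

lemma radInv_nonneg (b n : ℕ) : 0 ≤ radInv b n :=
  tsum_nonneg fun k => by positivity

lemma radInv_lt_one {b : ℕ} (hb : 2 ≤ b) (n : ℕ) : radInv b n < 1 := by
  have hn : n < b ^ n := Nat.lt_pow_self (by omega)
  rw [radInv_eq_sum hb hn, sum_digit_eq_rev hb n n hn]
  rw [div_lt_one (by positivity)]
  exact_mod_cast rev_lt (by omega) n n

theorem stmt2 (b m : ℕ) (hb : 2 ≤ b) (d1 d2 a1 a2 : ℕ)
    (hd : d1 + d2 = m) (ha1 : a1 < b ^ d1) (ha2 : a2 < b ^ d2) :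
    (((Finset.range (b ^ m)).filter (fun n =>
        ((a1 : ℝ) / (b : ℝ) ^ d1 ≤ radInv b n ∧ radInv b n < ((a1 : ℝ) + 1) / (b : ℝ) ^ d1) ∧
        ((a2 : ℝ) / (b : ℝ) ^ d2 ≤ (n : ℝ) / (b : ℝ) ^ m ∧
          (n : ℝ) / (b : ℝ) ^ m < ((a2 : ℝ) + 1) / (b : ℝ) ^ d2))).card : ℕ) = 1 := by
  have hb0 : 0 < b := by omega
  have hbR : (0:ℝ) < (b:ℝ) := by exact_mod_cast hb0
  have hp1 : (0:ℝ) < (b:ℝ) ^ d1 := by positivity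
  have hp2 : (0:ℝ) < (b:ℝ) ^ d2 := by positivity
  have hpm : (0:ℝ) < (b:ℝ) ^ m := by positivity
  have hbmR : ((b:ℝ)) ^ m = (b:ℝ) ^ d1 * (b:ℝ) ^ d2 := by rw [← pow_add, hd]
  have hd1pos : 0 < b ^ d1 := pow_pos hb0 d1
  -- find c with rev b d1 c = a1
  have himg : (Finset.range (b ^ d1)).image (rev b d1) = Finset.range (b ^ d1) := by
    apply Finset.eq_of_subset_of_card_le
    · intro x hx
      simp only [Finset.mem_image] at hx
      obtain ⟨y, _, rfl⟩ := hx
      exact Finset.mem_range.2 (rev_lt (by omega) _ _)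
    · rw [Finset.card_image_of_injOn]
      intro x hx y hy hxy
      exact rev_inj (by omega) d1 x y (Finset.mem_range.1 hx) (Finset.mem_range.1 hy) hxy
  obtain ⟨c, hc, hrc⟩ : ∃ c, c < b ^ d1 ∧ rev b d1 c = a1 := by
    have : a1 ∈ (Finset.range (b ^ d1)).image (rev b d1) := by
      rw [himg]; exact Finset.mem_range.2 ha1
    simp only [Finset.mem_image, Finset.mem_range] at this
    exact this
  set N := a2 * b ^ d1 + c with hN
  have hbm : b ^ m = b ^ d1 * b ^ d2 := by rw [← pow_add, hd]
  have hN2 : N < (a2 + 1) * b ^ d1 := by rw [add_mul, one_mul]; omega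
  have hNlt : N < b ^ m := by
    calc N < (a2 + 1) * b ^ d1 := hN2
      _ ≤ b ^ d2 * b ^ d1 := Nat.mul_le_mul_right _ (by omega)
      _ = b ^ m := by rw [hbm, mul_comm]
  have hNmod : N % b ^ d1 = c := by
    rw [hN, add_comm, Nat.add_mul_mod_self_right, Nat.mod_eq_of_lt hc]
  have hNdiv : N / b ^ d1 = a2 := by
    rw [hN, mul_comm, Nat.mul_add_div hd1pos, Nat.div_eq_of_lt hc, add_zero]
  -- second coordinate condition in terms of naturals
  have hcond2 : ∀ n : ℕ, ((a2 : ℝ) / (b : ℝ) ^ d2 ≤ (n : ℝ) / (b : ℝ) ^ m ∧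
      (n : ℝ) / (b : ℝ) ^ m < ((a2 : ℝ) + 1) / (b : ℝ) ^ d2) ↔
      (a2 * b ^ d1 ≤ n ∧ n < (a2 + 1) * b ^ d1) := by
    intro n
    rw [div_le_div_iff₀ hp2 hpm, div_lt_div_iff₀ hpm hp2, hbmR]
    constructor
    · rintro ⟨h1, h2⟩
      constructor
      · have : (a2 : ℝ) * b ^ d1 ≤ n := by nlinarith
        exact_mod_cast this
      · have : (n : ℝ) < ((a2 : ℝ) + 1) * b ^ d1 := by nlinarith
        exact_mod_cast this
    · rintro ⟨h1, h2⟩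
      have h1R : (a2 : ℝ) * b ^ d1 ≤ n := by exact_mod_cast h1
      have h2R : (n : ℝ) < ((a2 : ℝ) + 1) * b ^ d1 := by exact_mod_cast h2
      constructor <;> nlinarith
  rw [Finset.card_eq_one]
  refine ⟨N, ?_⟩
  rw [Finset.eq_singleton_iff_unique_mem]
  constructor
  · rw [Finset.mem_filter, Finset.mem_range]
    refine ⟨hNlt, ?_, (hcond2 N).2 ⟨by omega, hN2⟩⟩
    have hsplit := radInv_split hb d1 d2 N (by rw [hd]; exact hNlt)
    rw [hNmod, hNdiv, hrc] at hsplit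
    have hr0 : 0 ≤ radInv b a2 := radInv_nonneg b a2
    have hr1 : radInv b a2 < 1 := radInv_lt_one hb a2
    rw [hsplit]
    constructor
    · rw [div_le_div_iff_of_pos_right hp1]; linarith
    · rw [div_lt_div_iff_of_pos_right hp1]; linarith
  · intro n hn
    rw [Finset.mem_filter, Finset.mem_range] at hn
    obtain ⟨hnm, ⟨hL1, hL2⟩, hR⟩ := hn
    obtain ⟨h1, h2⟩ := (hcond2 n).1 hR
    have hdivn : n / b ^ d1 = a2 := Nat.div_eq_of_lt_le h1 h2
    have hsplit := radInv_split hb d1 d2 n (by rw [hd]; exact hnm)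
    rw [hdivn] at hsplit
    have hr0 : 0 ≤ radInv b a2 := radInv_nonneg b a2
    have hr1 : radInv b a2 < 1 := radInv_lt_one hb a2
    rw [hsplit, div_le_div_iff_of_pos_right hp1] at hL1
    rw [hsplit, div_lt_div_iff_of_pos_right hp1] at hL2
    have hRlt : (rev b d1 (n % b ^ d1) : ℝ) < (a1 : ℝ) + 1 := by linarith
    have hRgt : (a1 : ℝ) < (rev b d1 (n % b ^ d1) : ℝ) + 1 := by linarith
    have hRlt' : rev b d1 (n % b ^ d1) < a1 + 1 := by exact_mod_cast hRlt
    have hRgt' : a1 < rev b d1 (n % b ^ d1) + 1 := by exact_mod_cast hRgt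
    have hRa : rev b d1 (n % b ^ d1) = a1 := by omega
    have hmc : n % b ^ d1 = c := by
      apply rev_inj (b := b) (by omega) d1 _ _ (Nat.mod_lt _ hd1pos) hc
      rw [hRa, hrc]
    have hdm := Nat.div_add_mod n (b ^ d1)
    rw [hdivn, hmc, Nat.mul_comm] at hdm
    omega
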